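/- Let Q, X₁₁, X₂₁, X₃₁ be finite-valued random variables such that X₁₁, X₂₁, X₃₁ are mutually conditionally independent given Q. Let S₁ = h(X₂₁, X₃₁) where h is one-to-one in each argument, and let Y₁ = f(X₁₁, S₁) where f is one-to-one in each argument. Then H(Y₁|X₃₁,Q) − H(X₂₁|Q) ≥ H(Y₁|Q) − H(S₁|Q). -/

import Mathlib

open scoped Classical
open Finset

/-- A probability mass function on a finite sample space, given as a real-valued
weight function that is nonnegative and sums to one. -/
structure FinPMF (Ω : Type) where
  [fin : Fintype Ω]
  p : Ω → ℝ
  nonneg : ∀ ω, 0 ≤ p ω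
  sum_one : ∑ ω, p ω = 1

/-- Probability of an event. -/
noncomputable def prE {Ω : Type} (μ : FinPMF Ω) (E : Ω → Prop) : ℝ :=
  letI := μ.fin
  ∑ ω, if E ω then μ.p ω else 0

/-- Probability that the random variable `X` takes the value `x`. -/
noncomputable def prX {Ω α : Type} (μ : FinPMF Ω) (X : Ω → α) (x : α) : ℝ :=
  prE μ (fun ω => X ω = x)

/-- Shannon entropy (base 2) of a random variable on a finite probability space. -/
noncomputable def entH {Ω α : Type} (μ : FinPMF Ω) (X : Ω → α) : ℝ :=
  letI := μ.fin;
  -∑ x ∈ Finset.univ.image X, prX μ X x * Real.logb 2 (prX μ X x)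

/-- Conditional entropy `H(X | Y)` (base 2). -/
noncomputable def condH {Ω α β : Type} (μ : FinPMF Ω) (X : Ω → α) (Y : Ω → β) : ℝ :=
  entH μ (fun ω => (X ω, Y ω)) - entH μ Y

/-- Conditional mutual information `I(X ; Y | Q)` (base 2). -/
noncomputable def condMI {Ω α β γ : Type} (μ : FinPMF Ω) (X : Ω → α) (Y : Ω → β)
    (Q : Ω → γ) : ℝ :=
  condH μ X Q + condH μ Y Q - condH μ (fun ω => (X ω, Y ω)) Q

/-- A two-argument function is one-to-one in each argument. -/
def OneToOne {A B C : Type} (f : A → B → C) : Prop :=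
  (∀ b, Function.Injective fun a => f a b) ∧ ∀ a, Function.Injective (f a)

/-- Conditional pmf `p_{X|U}(x|u)`. -/
noncomputable def condP {Ω α γ : Type} (μ : FinPMF Ω) (X : Ω → α) (U : Ω → γ)
    (x : α) (u : γ) : ℝ :=
  prE μ (fun ω => X ω = x ∧ U ω = u) / prX μ U u

/-- Independence of two random variables. -/
def IndepFun {Ω α β : Type} (μ : FinPMF Ω) (X : Ω → α) (S : Ω → β) : Prop :=
  ∀ x s, prE μ (fun ω => X ω = x ∧ S ω = s) = prX μ X x * prX μ S s

/-- Conditional independence of `A` and `B` given `Z`: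
for every `z` with `P(Z = z) > 0`, `P(A = a, B = b | Z = z) = P(A = a | Z = z) P(B = b | Z = z)`. -/
def CondIndepFun {Ω α β γ : Type} (μ : FinPMF Ω) (A : Ω → α) (B : Ω → β) (Z : Ω → γ) : Prop :=
  ∀ a b z, 0 < prX μ Z z →
    prE μ (fun ω => A ω = a ∧ B ω = b ∧ Z ω = z) / prX μ Z z =
      (prE μ (fun ω => A ω = a ∧ Z ω = z) / prX μ Z z) *
        (prE μ (fun ω => B ω = b ∧ Z ω = z) / prX μ Z z)

/-- Mutual conditional independence of `X₁, X₂, X₃` given `Q`: the joint conditional pmf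
factors into the product of the conditional marginals. -/
def CondIndepFun3 {Ω α₁ α₂ α₃ γ : Type} (μ : FinPMF Ω)
    (X₁ : Ω → α₁) (X₂ : Ω → α₂) (X₃ : Ω → α₃) (Q : Ω → γ) : Prop :=
  ∀ x₁ x₂ x₃ q, 0 < prX μ Q q →
    prE μ (fun ω => X₁ ω = x₁ ∧ X₂ ω = x₂ ∧ X₃ ω = x₃ ∧ Q ω = q) / prX μ Q q =
      (prE μ (fun ω => X₁ ω = x₁ ∧ Q ω = q) / prX μ Q q) *
        (prE μ (fun ω => X₂ ω = x₂ ∧ Q ω = q) / prX μ Q q) *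
        (prE μ (fun ω => X₃ ω = x₃ ∧ Q ω = q) / prX μ Q q)

/-- The ε-typical set (sequences whose empirical pmf is within a relative ε of `p`). -/
def Typical {𝒳 : Type} [Fintype 𝒳] (p : 𝒳 → ℝ) (ε : ℝ) (n : ℕ) (xs : Fin n → 𝒳) : Prop :=
  ∀ x : 𝒳, |((Finset.univ.filter fun i => xs i = x).card : ℝ) / n - p x| ≤ ε * p x

/-- The number of codewords `⌈2^{nR}⌉` at rate `R` and blocklength `n`. -/
noncomputable def codeSize (R : ℝ) (n : ℕ) : ℕ := ⌈(2 : ℝ) ^ ((n : ℝ) * R)⌉₊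

section Basics
variable {Ω : Type} (μ : FinPMF Ω)

lemma prE_nonneg (E : Ω → Prop) : 0 ≤ prE μ E := by
  unfold prE
  exact Finset.sum_nonneg fun ω _ => by split <;> simp [μ.nonneg ω]

lemma prE_congr {E F : Ω → Prop} (h : ∀ ω, E ω ↔ F ω) : prE μ E = prE μ F := by
  unfold prE
  exact Finset.sum_congr rfl fun ω _ => if_congr (h ω) rfl rfl

lemma prE_mono {E F : Ω → Prop} (h : ∀ ω, E ω → F ω) : prE μ E ≤ prE μ F := by
  unfold prE
  refine Finset.sum_le_sum fun ω _ => ?_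
  by_cases hE : E ω
  · rw [if_pos hE, if_pos (h ω hE)]
  · rw [if_neg hE]; split <;> simp [μ.nonneg ω]

lemma prE_partition {α : Type} [Fintype α] (X : Ω → α) (E : Ω → Prop) :
    prE μ E = ∑ x, prE μ (fun ω => E ω ∧ X ω = x) := by
  unfold prE
  rw [Finset.sum_comm]
  refine Finset.sum_congr rfl fun ω _ => ?_
  by_cases hE : E ω
  · simp [hE]
  · simp [hE]

lemma prX_nonneg {α : Type} (X : Ω → α) (x : α) : 0 ≤ prX μ X x := prE_nonneg μ _

lemma entH_eq_sum_univ {α : Type} [Fintype α] (X : Ω → α) :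
    entH μ X = -∑ x, prX μ X x * Real.logb 2 (prX μ X x) := by
  letI := μ.fin
  unfold entH
  congr 1
  refine Finset.sum_subset (s₁ := Finset.univ.image X) (s₂ := Finset.univ)
    (f := fun x => prX μ X x * Real.logb 2 (prX μ X x)) (Finset.subset_univ _)
    fun x _ hx => ?_
  have hz : prX μ X x = 0 := by
    unfold prX prE
    refine Finset.sum_eq_zero fun ω _ => ?_
    rw [if_neg]
    intro hh
    exact hx (Finset.mem_image.mpr ⟨ω, Finset.mem_univ ω, hh⟩)
  rw [hz]; ring

lemma prX_comp {α β : Type} (g : α → β) (hg : Function.Injective g) (X : Ω → α) (x : α) :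
    prX μ (fun ω => g (X ω)) (g x) = prX μ X x :=
  prE_congr μ fun ω => ⟨fun hh => hg hh, fun hh => by show g (X ω) = g x; rw [hh]⟩

lemma entH_comp_inj {α β : Type} (g : α → β) (hg : Function.Injective g) (X : Ω → α) :
    entH μ (fun ω => g (X ω)) = entH μ X := by
  letI := μ.fin
  unfold entH
  congr 1
  have himg : (Finset.univ.image fun ω => g (X ω)) = (Finset.univ.image X).image g := by
    rw [Finset.image_image]; rfl
  rw [himg, Finset.sum_image (fun a _ b _ hab => hg hab)]
  exact Finset.sum_congr rfl fun x _ => by rw [prX_comp μ g hg]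

end Basics

section Big
variable {Ω α γ δ : Type} [Fintype α] [Fintype γ] [Fintype δ]
variable (μ : FinPMF Ω) (A : Ω → α) (C : Ω → γ) (Z : Ω → δ)

lemma entH_pair :
    entH μ (fun ω => (A ω, Z ω)) =
      -∑ z, ∑ a, prE μ (fun ω => A ω = a ∧ Z ω = z) *
        Real.logb 2 (prE μ (fun ω => A ω = a ∧ Z ω = z)) := by
  rw [entH_eq_sum_univ, Fintype.sum_prod_type, Finset.sum_comm]
  congr 1
  refine Finset.sum_congr rfl fun z _ => Finset.sum_congr rfl fun a _ => ?_
  have : prX μ (fun ω => (A ω, Z ω)) (a, z) = prE μ (fun ω => A ω = a ∧ Z ω = z) :=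
    prE_congr μ fun ω => by simp [Prod.ext_iff]
  rw [this]

lemma entH_triple :
    entH μ (fun ω => (A ω, C ω, Z ω)) =
      -∑ z, ∑ a, ∑ c, prE μ (fun ω => A ω = a ∧ C ω = c ∧ Z ω = z) *
        Real.logb 2 (prE μ (fun ω => A ω = a ∧ C ω = c ∧ Z ω = z)) := by
  rw [entH_eq_sum_univ, Fintype.sum_prod_type]
  have : ∀ a : α, ∑ x : γ × δ, prX μ (fun ω => (A ω, C ω, Z ω)) (a, x) *
        Real.logb 2 (prX μ (fun ω => (A ω, C ω, Z ω)) (a, x)) =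
      ∑ z, ∑ c, prE μ (fun ω => A ω = a ∧ C ω = c ∧ Z ω = z) *
        Real.logb 2 (prE μ (fun ω => A ω = a ∧ C ω = c ∧ Z ω = z)) := by
    intro a
    rw [Fintype.sum_prod_type, Finset.sum_comm]
    refine Finset.sum_congr rfl fun z _ => Finset.sum_congr rfl fun c _ => ?_
    have : prX μ (fun ω => (A ω, C ω, Z ω)) (a, c, z) =
        prE μ (fun ω => A ω = a ∧ C ω = c ∧ Z ω = z) :=
      prE_congr μ fun ω => by simp [Prod.ext_iff]
    rw [this]
  simp only [this]
  rw [Finset.sum_comm]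

lemma entH_single :
    entH μ Z = -∑ z, prX μ Z z * Real.logb 2 (prX μ Z z) :=
  entH_eq_sum_univ μ Z

lemma marg_C (a : α) (z : δ) :
    ∑ c, prE μ (fun ω => A ω = a ∧ C ω = c ∧ Z ω = z) =
      prE μ (fun ω => A ω = a ∧ Z ω = z) := by
  rw [prE_partition μ C (fun ω => A ω = a ∧ Z ω = z)]
  exact Finset.sum_congr rfl fun c _ => prE_congr μ fun ω => by tauto

lemma marg_A (c : γ) (z : δ) :
    ∑ a, prE μ (fun ω => A ω = a ∧ C ω = c ∧ Z ω = z) =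
      prE μ (fun ω => C ω = c ∧ Z ω = z) := by
  rw [prE_partition μ A (fun ω => C ω = c ∧ Z ω = z)]
  exact Finset.sum_congr rfl fun a _ => prE_congr μ fun ω => by tauto

lemma marg_pairA (z : δ) :
    ∑ a, prE μ (fun ω => A ω = a ∧ Z ω = z) = prX μ Z z := by
  rw [show prX μ Z z = prE μ (fun ω => Z ω = z) from rfl,
    prE_partition μ A (fun ω => Z ω = z)]
  exact Finset.sum_congr rfl fun a _ => prE_congr μ fun ω => by tauto

lemma marg_pairC (z : δ) :
    ∑ c, prE μ (fun ω => C ω = c ∧ Z ω = z) = prX μ Z z := by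
  rw [show prX μ Z z = prE μ (fun ω => Z ω = z) from rfl,
    prE_partition μ C (fun ω => Z ω = z)]
  exact Finset.sum_congr rfl fun c _ => prE_congr μ fun ω => by tauto


lemma p3_le_pZ (a : α) (c : γ) (z : δ) :
    prE μ (fun ω => A ω = a ∧ C ω = c ∧ Z ω = z) ≤ prX μ Z z :=
  prE_mono μ fun ω hω => hω.2.2

lemma p3_le_pA (a : α) (c : γ) (z : δ) :
    prE μ (fun ω => A ω = a ∧ C ω = c ∧ Z ω = z) ≤ prE μ (fun ω => A ω = a ∧ Z ω = z) :=
  prE_mono μ fun ω hω => ⟨hω.1, hω.2.2⟩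

lemma p3_le_pC (a : α) (c : γ) (z : δ) :
    prE μ (fun ω => A ω = a ∧ C ω = c ∧ Z ω = z) ≤ prE μ (fun ω => C ω = c ∧ Z ω = z) :=
  prE_mono μ fun ω hω => ⟨hω.2.1, hω.2.2⟩

lemma pA_le_pZ (a : α) (z : δ) :
    prE μ (fun ω => A ω = a ∧ Z ω = z) ≤ prX μ Z z :=
  prE_mono μ fun ω hω => hω.2

lemma entH_condIndep
    (hfac : ∀ a c z,
      prE μ (fun ω => A ω = a ∧ C ω = c ∧ Z ω = z) * prX μ Z z =
        prE μ (fun ω => A ω = a ∧ Z ω = z) * prE μ (fun ω => C ω = c ∧ Z ω = z)) :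
    entH μ (fun ω => (A ω, C ω, Z ω)) + entH μ Z =
      entH μ (fun ω => (A ω, Z ω)) + entH μ (fun ω => (C ω, Z ω)) := by
  set p3 : α → γ → δ → ℝ := fun a c z => prE μ (fun ω => A ω = a ∧ C ω = c ∧ Z ω = z) with hp3
  set pA : α → δ → ℝ := fun a z => prE μ (fun ω => A ω = a ∧ Z ω = z) with hpA
  set pC : γ → δ → ℝ := fun c z => prE μ (fun ω => C ω = c ∧ Z ω = z) with hpC
  set pZ : δ → ℝ := fun z => prX μ Z z with hpZ
  have key : ∀ a c z, p3 a c z * Real.logb 2 (p3 a c z) =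
      p3 a c z * Real.logb 2 (pA a z) + p3 a c z * Real.logb 2 (pC c z)
        - p3 a c z * Real.logb 2 (pZ z) := by
    intro a c z
    by_cases h0 : p3 a c z = 0
    · simp [h0]
    have hp3pos : 0 < p3 a c z := lt_of_le_of_ne (prE_nonneg μ _) (Ne.symm h0)
    have hpApos : 0 < pA a z := lt_of_lt_of_le hp3pos (p3_le_pA μ A C Z a c z)
    have hpCpos : 0 < pC c z := lt_of_lt_of_le hp3pos (p3_le_pC μ A C Z a c z)
    have hpZpos : 0 < pZ z := lt_of_lt_of_le hp3pos (p3_le_pZ μ A C Z a c z)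
    have hmul : p3 a c z * pZ z = pA a z * pC c z := hfac a c z
    have hlog : Real.logb 2 (p3 a c z) + Real.logb 2 (pZ z) =
        Real.logb 2 (pA a z) + Real.logb 2 (pC c z) := by
      rw [← Real.logb_mul hp3pos.ne' hpZpos.ne', ← Real.logb_mul hpApos.ne' hpCpos.ne', hmul]
    have : Real.logb 2 (p3 a c z) =
        Real.logb 2 (pA a z) + Real.logb 2 (pC c z) - Real.logb 2 (pZ z) := by linarith
    rw [this]; ring
  rw [entH_triple, entH_pair, entH_pair, entH_single]
  have hsum : ∑ z, ∑ a, ∑ c, p3 a c z * Real.logb 2 (p3 a c z) =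
      (∑ z, ∑ a, pA a z * Real.logb 2 (pA a z))
        + (∑ z, ∑ c, pC c z * Real.logb 2 (pC c z))
        - (∑ z, pZ z * Real.logb 2 (pZ z)) := by
    have e1 : ∀ z, ∑ a, ∑ c, p3 a c z * Real.logb 2 (pA a z) =
        ∑ a, pA a z * Real.logb 2 (pA a z) := by
      intro z
      refine Finset.sum_congr rfl fun a _ => ?_
      rw [← Finset.sum_mul, marg_C]
    have e2 : ∀ z, ∑ a, ∑ c, p3 a c z * Real.logb 2 (pC c z) =
        ∑ c, pC c z * Real.logb 2 (pC c z) := by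
      intro z
      rw [Finset.sum_comm]
      refine Finset.sum_congr rfl fun c _ => ?_
      rw [← Finset.sum_mul, marg_A]
    have e3 : ∀ z, ∑ a, ∑ c, p3 a c z * Real.logb 2 (pZ z) =
        pZ z * Real.logb 2 (pZ z) := by
      intro z
      have : ∀ a, ∑ c, p3 a c z * Real.logb 2 (pZ z) = pA a z * Real.logb 2 (pZ z) := by
        intro a; rw [← Finset.sum_mul, marg_C]
      simp only [this]
      rw [← Finset.sum_mul, marg_pairA]
    calc ∑ z, ∑ a, ∑ c, p3 a c z * Real.logb 2 (p3 a c z)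
        = ∑ z, ((∑ a, ∑ c, p3 a c z * Real.logb 2 (pA a z))
            + (∑ a, ∑ c, p3 a c z * Real.logb 2 (pC c z))
            - (∑ a, ∑ c, p3 a c z * Real.logb 2 (pZ z))) := by
          refine Finset.sum_congr rfl fun z _ => ?_
          rw [← Finset.sum_add_distrib, ← Finset.sum_sub_distrib]
          refine Finset.sum_congr rfl fun a _ => ?_
          rw [← Finset.sum_add_distrib, ← Finset.sum_sub_distrib]
          exact Finset.sum_congr rfl fun c _ => key a c z
      _ = _ := by
          rw [← Finset.sum_add_distrib, ← Finset.sum_sub_distrib]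
          exact Finset.sum_congr rfl fun z _ => by rw [e1 z, e2 z, e3 z]
  rw [hsum]; ring

lemma entH_submod :
    entH μ (fun ω => (A ω, Z ω)) + entH μ (fun ω => (C ω, Z ω)) ≥
      entH μ (fun ω => (A ω, C ω, Z ω)) + entH μ Z := by
  set p3 : α → γ → δ → ℝ := fun a c z => prE μ (fun ω => A ω = a ∧ C ω = c ∧ Z ω = z) with hp3
  set pA : α → δ → ℝ := fun a z => prE μ (fun ω => A ω = a ∧ Z ω = z) with hpA
  set pC : γ → δ → ℝ := fun c z => prE μ (fun ω => C ω = c ∧ Z ω = z) with hpC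
  set pZ : δ → ℝ := fun z => prX μ Z z with hpZ
  have hlog2 : (0:ℝ) < Real.log 2 := Real.log_pos one_lt_two
  -- pointwise bound (multiplied by log 2)
  have key : ∀ a c z,
      p3 a c z * (Real.logb 2 (pA a z) + Real.logb 2 (pC c z)
        - Real.logb 2 (pZ z) - Real.logb 2 (p3 a c z)) * Real.log 2
        ≤ pA a z * pC c z / pZ z - p3 a c z := by
    intro a c z
    by_cases h0 : p3 a c z = 0
    · rw [h0]
      simp only [zero_mul, sub_zero]
      exact div_nonneg (mul_nonneg (prE_nonneg μ _) (prE_nonneg μ _)) (prX_nonneg μ Z z)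
    have hp3pos : 0 < p3 a c z := lt_of_le_of_ne (prE_nonneg μ _) (Ne.symm h0)
    have hpApos : 0 < pA a z := lt_of_lt_of_le hp3pos (p3_le_pA μ A C Z a c z)
    have hpCpos : 0 < pC c z := lt_of_lt_of_le hp3pos (p3_le_pC μ A C Z a c z)
    have hpZpos : 0 < pZ z := lt_of_lt_of_le hp3pos (p3_le_pZ μ A C Z a c z)
    set r : ℝ := pA a z * pC c z / (pZ z * p3 a c z) with hr
    have hrpos : 0 < r := div_pos (mul_pos hpApos hpCpos) (mul_pos hpZpos hp3pos)
    have hlogr : Real.log r = Real.log (pA a z) + Real.log (pC c z)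
        - Real.log (pZ z) - Real.log (p3 a c z) := by
      rw [hr, Real.log_div (mul_pos hpApos hpCpos).ne' (mul_pos hpZpos hp3pos).ne',
        Real.log_mul hpApos.ne' hpCpos.ne', Real.log_mul hpZpos.ne' hp3pos.ne']
      ring
    have hle : Real.log r ≤ r - 1 := Real.log_le_sub_one_of_pos hrpos
    have hmulr : p3 a c z * r = pA a z * pC c z / pZ z := by
      rw [hr]; field_simp
    have hlhs : p3 a c z * (Real.logb 2 (pA a z) + Real.logb 2 (pC c z)
        - Real.logb 2 (pZ z) - Real.logb 2 (p3 a c z)) * Real.log 2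
        = p3 a c z * Real.log r := by
      simp only [Real.logb, hlogr]
      field_simp
    rw [hlhs]
    calc p3 a c z * Real.log r ≤ p3 a c z * (r - 1) := by
          exact mul_le_mul_of_nonneg_left hle hp3pos.le
      _ = pA a z * pC c z / pZ z - p3 a c z := by rw [mul_sub, hmulr]; ring
  -- per-z bound on the sum of right-hand sides
  have perz : ∀ z, ∑ a, ∑ c, (pA a z * pC c z / pZ z - p3 a c z) ≤ 0 := by
    intro z
    have hsplit : ∑ a, ∑ c, (pA a z * pC c z / pZ z - p3 a c z) =
        (∑ a, pA a z) * (∑ c, pC c z) / pZ z - ∑ a, ∑ c, p3 a c z := by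
      rw [Finset.sum_mul, Finset.sum_div, ← Finset.sum_sub_distrib]
      refine Finset.sum_congr rfl fun a _ => ?_
      rw [Finset.mul_sum, Finset.sum_div, ← Finset.sum_sub_distrib]
    have hm3 : ∑ a, ∑ c, p3 a c z = pZ z := by
      have : ∀ a, ∑ c, p3 a c z = pA a z := fun a => marg_C μ A C Z a z
      simp only [this]
      exact marg_pairA μ A Z z
    rw [hsplit, marg_pairA μ A Z z, marg_pairC μ C Z z, hm3]
    by_cases hz : pZ z = 0
    · simp [hz]
    have hzpos : 0 < pZ z := lt_of_le_of_ne (prX_nonneg μ Z z) (Ne.symm hz)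
    rw [mul_div_assoc, div_self hz, mul_one]
    simp; exact le_rfl
  -- assemble
  have main : (∑ z, ∑ a, ∑ c, p3 a c z * (Real.logb 2 (pA a z) + Real.logb 2 (pC c z)
      - Real.logb 2 (pZ z) - Real.logb 2 (p3 a c z)))* Real.log 2 ≤ 0 := by
    rw [Finset.sum_mul]
    have : ∀ z, (∑ a, ∑ c, p3 a c z * (Real.logb 2 (pA a z) + Real.logb 2 (pC c z)
        - Real.logb 2 (pZ z) - Real.logb 2 (p3 a c z))) * Real.log 2 ≤ 0 := by
      intro z
      rw [Finset.sum_mul]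
      have step : ∀ a, (∑ c, p3 a c z * (Real.logb 2 (pA a z) + Real.logb 2 (pC c z)
          - Real.logb 2 (pZ z) - Real.logb 2 (p3 a c z))) * Real.log 2 ≤
          ∑ c, (pA a z * pC c z / pZ z - p3 a c z) := by
        intro a
        rw [Finset.sum_mul]
        exact Finset.sum_le_sum fun c _ => key a c z
      calc ∑ a, (∑ c, p3 a c z * (Real.logb 2 (pA a z) + Real.logb 2 (pC c z)
            - Real.logb 2 (pZ z) - Real.logb 2 (p3 a c z))) * Real.log 2
          ≤ ∑ a, ∑ c, (pA a z * pC c z / pZ z - p3 a c z) :=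
            Finset.sum_le_sum fun a _ => step a
        _ ≤ 0 := perz z
    exact Finset.sum_nonpos fun z _ => this z
  have hTnn : 0 ≤ ∑ z, ∑ a, ∑ c, p3 a c z * (Real.logb 2 (p3 a c z) + Real.logb 2 (pZ z)
      - Real.logb 2 (pA a z) - Real.logb 2 (pC c z)) := by
    have heq : ∑ z, ∑ a, ∑ c, p3 a c z * (Real.logb 2 (p3 a c z) + Real.logb 2 (pZ z)
        - Real.logb 2 (pA a z) - Real.logb 2 (pC c z)) =
        -(∑ z, ∑ a, ∑ c, p3 a c z * (Real.logb 2 (pA a z) + Real.logb 2 (pC c z)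
        - Real.logb 2 (pZ z) - Real.logb 2 (p3 a c z))) := by
      rw [← Finset.sum_neg_distrib]
      refine Finset.sum_congr rfl fun z _ => ?_
      rw [← Finset.sum_neg_distrib]
      refine Finset.sum_congr rfl fun a _ => ?_
      rw [← Finset.sum_neg_distrib]
      exact Finset.sum_congr rfl fun c _ => by ring
    rw [heq]
    by_contra hneg
    push_neg at hneg
    have : -(∑ z, ∑ a, ∑ c, p3 a c z * (Real.logb 2 (pA a z) + Real.logb 2 (pC c z)
        - Real.logb 2 (pZ z) - Real.logb 2 (p3 a c z))) < 0 := hneg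
    nlinarith [main, hlog2]
  -- rewrite entropies and distribute
  rw [entH_triple, entH_pair, entH_pair, entH_single]
  have e1 : ∀ z, ∑ a, ∑ c, p3 a c z * Real.logb 2 (pA a z) =
      ∑ a, pA a z * Real.logb 2 (pA a z) := by
    intro z
    refine Finset.sum_congr rfl fun a _ => ?_
    rw [← Finset.sum_mul, marg_C]
  have e2 : ∀ z, ∑ a, ∑ c, p3 a c z * Real.logb 2 (pC c z) =
      ∑ c, pC c z * Real.logb 2 (pC c z) := by
    intro z
    rw [Finset.sum_comm]
    refine Finset.sum_congr rfl fun c _ => ?_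
    rw [← Finset.sum_mul, marg_A]
  have e3 : ∀ z, ∑ a, ∑ c, p3 a c z * Real.logb 2 (pZ z) =
      pZ z * Real.logb 2 (pZ z) := by
    intro z
    have : ∀ a, ∑ c, p3 a c z * Real.logb 2 (pZ z) = pA a z * Real.logb 2 (pZ z) := by
      intro a; rw [← Finset.sum_mul, marg_C]
    simp only [this]
    rw [← Finset.sum_mul, marg_pairA]
  have hexpand : ∑ z, ∑ a, ∑ c, p3 a c z * (Real.logb 2 (p3 a c z) + Real.logb 2 (pZ z)
      - Real.logb 2 (pA a z) - Real.logb 2 (pC c z)) =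
      (∑ z, ∑ a, ∑ c, p3 a c z * Real.logb 2 (p3 a c z))
      + (∑ z, pZ z * Real.logb 2 (pZ z))
      - (∑ z, ∑ a, pA a z * Real.logb 2 (pA a z))
      - (∑ z, ∑ c, pC c z * Real.logb 2 (pC c z)) := by
    have inner : ∀ z, ∑ a, ∑ c, p3 a c z * (Real.logb 2 (p3 a c z) + Real.logb 2 (pZ z)
        - Real.logb 2 (pA a z) - Real.logb 2 (pC c z)) =
        (∑ a, ∑ c, p3 a c z * Real.logb 2 (p3 a c z))
        + (∑ a, ∑ c, p3 a c z * Real.logb 2 (pZ z))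
        - (∑ a, ∑ c, p3 a c z * Real.logb 2 (pA a z))
        - (∑ a, ∑ c, p3 a c z * Real.logb 2 (pC c z)) := by
      intro z
      rw [← Finset.sum_add_distrib, ← Finset.sum_sub_distrib, ← Finset.sum_sub_distrib]
      refine Finset.sum_congr rfl fun a _ => ?_
      rw [← Finset.sum_add_distrib, ← Finset.sum_sub_distrib, ← Finset.sum_sub_distrib]
      exact Finset.sum_congr rfl fun c _ => by ring
    calc ∑ z, ∑ a, ∑ c, p3 a c z * (Real.logb 2 (p3 a c z) + Real.logb 2 (pZ z)
        - Real.logb 2 (pA a z) - Real.logb 2 (pC c z))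
        = ∑ z, ((∑ a, ∑ c, p3 a c z * Real.logb 2 (p3 a c z))
          + (∑ a, ∑ c, p3 a c z * Real.logb 2 (pZ z))
          - (∑ a, ∑ c, p3 a c z * Real.logb 2 (pA a z))
          - (∑ a, ∑ c, p3 a c z * Real.logb 2 (pC c z))) :=
          Finset.sum_congr rfl fun z _ => inner z
      _ = _ := by
          rw [← Finset.sum_add_distrib, ← Finset.sum_sub_distrib, ← Finset.sum_sub_distrib]
          exact Finset.sum_congr rfl fun z _ => by rw [e1 z, e2 z, e3 z]
  rw [hexpand] at hTnn
  linarith [hTnn]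

end Big

section Prob
variable {Ω 𝒬 𝒜 ℬ 𝒞 𝒮 : Type} [Fintype 𝒬] [Fintype 𝒜] [Fintype ℬ] [Fintype 𝒞] [Fintype 𝒮]
variable (μ : FinPMF Ω) (Q : Ω → 𝒬) (X₁ : Ω → 𝒜) (X₂ : Ω → ℬ) (X₃ : Ω → 𝒞)

lemma prE_eq_zero_of_imp {E : Ω → Prop} {q : 𝒬} (himp : ∀ ω, E ω → Q ω = q)
    (hq : prX μ Q q = 0) : prE μ E = 0 :=
  le_antisymm (le_of_le_of_eq (prE_mono μ himp) hq) (prE_nonneg μ E)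

lemma hstar (hindep : CondIndepFun3 μ X₁ X₂ X₃ Q) (a : 𝒜) (b : ℬ) (c : 𝒞) (q : 𝒬) :
    prE μ (fun ω => X₁ ω = a ∧ X₂ ω = b ∧ X₃ ω = c ∧ Q ω = q) * prX μ Q q * prX μ Q q =
      prE μ (fun ω => X₁ ω = a ∧ Q ω = q) * prE μ (fun ω => X₂ ω = b ∧ Q ω = q) *
        prE μ (fun ω => X₃ ω = c ∧ Q ω = q) := by
  by_cases hq : prX μ Q q = 0
  · rw [prE_eq_zero_of_imp μ Q (fun ω hω => hω.2.2.2) hq,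
      prE_eq_zero_of_imp μ Q (fun ω hω => hω.2) hq, hq]
    ring
  · have hpos : 0 < prX μ Q q := lt_of_le_of_ne (prX_nonneg μ Q q) (Ne.symm hq)
    have h1 := hindep a b c q hpos
    field_simp at h1
    exact mul_right_cancel₀ hq (by linear_combination (prX μ Q q) * h1)

lemma pairfact (hindep : CondIndepFun3 μ X₁ X₂ X₃ Q) (b : ℬ) (c : 𝒞) (q : 𝒬) :
    prE μ (fun ω => X₂ ω = b ∧ X₃ ω = c ∧ Q ω = q) * prX μ Q q =
      prE μ (fun ω => X₂ ω = b ∧ Q ω = q) * prE μ (fun ω => X₃ ω = c ∧ Q ω = q) := by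
  by_cases hq : prX μ Q q = 0
  · rw [prE_eq_zero_of_imp μ Q (fun ω (hω : X₂ ω = b ∧ Q ω = q) => hω.2) hq, hq,
      zero_mul, mul_zero]
  · have hpart : prE μ (fun ω => X₂ ω = b ∧ X₃ ω = c ∧ Q ω = q) =
        ∑ a, prE μ (fun ω => X₁ ω = a ∧ X₂ ω = b ∧ X₃ ω = c ∧ Q ω = q) := by
      rw [prE_partition μ X₁ (fun ω => X₂ ω = b ∧ X₃ ω = c ∧ Q ω = q)]
      exact Finset.sum_congr rfl fun a _ => prE_congr μ fun ω => by tauto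
    have hkey : prE μ (fun ω => X₂ ω = b ∧ X₃ ω = c ∧ Q ω = q) * prX μ Q q * prX μ Q q =
        prX μ Q q * (prE μ (fun ω => X₂ ω = b ∧ Q ω = q) *
          prE μ (fun ω => X₃ ω = c ∧ Q ω = q)) := by
      rw [hpart, Finset.sum_mul, Finset.sum_mul]
      have : ∀ a : 𝒜, prE μ (fun ω => X₁ ω = a ∧ X₂ ω = b ∧ X₃ ω = c ∧ Q ω = q) *
          prX μ Q q * prX μ Q q =
          prE μ (fun ω => X₁ ω = a ∧ Q ω = q) * (prE μ (fun ω => X₂ ω = b ∧ Q ω = q) *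
            prE μ (fun ω => X₃ ω = c ∧ Q ω = q)) := by
        intro a
        rw [hstar μ Q X₁ X₂ X₃ hindep a b c q]
        ring
      rw [Finset.sum_congr rfl fun a _ => this a, ← Finset.sum_mul, marg_pairA μ X₁ Q q]
    exact mul_right_cancel₀ hq (by linear_combination hkey)

lemma prE_false : prE μ (fun _ => False) = 0 := by
  unfold prE; simp

variable (h : ℬ → 𝒞 → 𝒮)

lemma c1fact (hindep : CondIndepFun3 μ X₁ X₂ X₃ Q) (a : 𝒜) (c : 𝒞) (s : 𝒮) (q : 𝒬) :
    prE μ (fun ω => X₁ ω = a ∧ X₃ ω = c ∧ h (X₂ ω) (X₃ ω) = s ∧ Q ω = q) *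
        prX μ Q q * prX μ Q q =
      prE μ (fun ω => X₁ ω = a ∧ Q ω = q) * prE μ (fun ω => X₃ ω = c ∧ Q ω = q) *
        ∑ b, (if h b c = s then prE μ (fun ω => X₂ ω = b ∧ Q ω = q) else 0) := by
  have hpart : prE μ (fun ω => X₁ ω = a ∧ X₃ ω = c ∧ h (X₂ ω) (X₃ ω) = s ∧ Q ω = q) =
      ∑ b, (if h b c = s then
        prE μ (fun ω => X₁ ω = a ∧ X₂ ω = b ∧ X₃ ω = c ∧ Q ω = q) else 0) := by
    rw [prE_partition μ X₂ (fun ω => X₁ ω = a ∧ X₃ ω = c ∧ h (X₂ ω) (X₃ ω) = s ∧ Q ω = q)]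
    refine Finset.sum_congr rfl fun b _ => ?_
    by_cases hbc : h b c = s
    · rw [if_pos hbc]
      refine prE_congr μ fun ω => ⟨fun hω => ⟨hω.1.1, hω.2, hω.1.2.1, hω.1.2.2.2⟩,
        fun hω => ⟨⟨hω.1, hω.2.2.1, by rw [hω.2.1, hω.2.2.1]; exact hbc, hω.2.2.2⟩, hω.2.1⟩⟩
    · rw [if_neg hbc,
        prE_congr μ (F := fun _ => False) fun ω =>
          ⟨fun hω => hbc (by rw [← hω.2, ← hω.1.2.1]; exact hω.1.2.2.1), False.elim⟩,
        prE_false]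
  rw [hpart, Finset.sum_mul, Finset.sum_mul, Finset.mul_sum]
  refine Finset.sum_congr rfl fun b _ => ?_
  by_cases hbc : h b c = s
  · rw [if_pos hbc, if_pos hbc, hstar μ Q X₁ X₂ X₃ hindep a b c q]
    ring
  · rw [if_neg hbc, if_neg hbc]
    simp

lemma c3fact (hindep : CondIndepFun3 μ X₁ X₂ X₃ Q) (c : 𝒞) (s : 𝒮) (q : 𝒬) :
    prE μ (fun ω => X₃ ω = c ∧ h (X₂ ω) (X₃ ω) = s ∧ Q ω = q) * prX μ Q q =
      prE μ (fun ω => X₃ ω = c ∧ Q ω = q) *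
        ∑ b, (if h b c = s then prE μ (fun ω => X₂ ω = b ∧ Q ω = q) else 0) := by
  have hpart : prE μ (fun ω => X₃ ω = c ∧ h (X₂ ω) (X₃ ω) = s ∧ Q ω = q) =
      ∑ b, (if h b c = s then
        prE μ (fun ω => X₂ ω = b ∧ X₃ ω = c ∧ Q ω = q) else 0) := by
    rw [prE_partition μ X₂ (fun ω => X₃ ω = c ∧ h (X₂ ω) (X₃ ω) = s ∧ Q ω = q)]
    refine Finset.sum_congr rfl fun b _ => ?_
    by_cases hbc : h b c = s
    · rw [if_pos hbc]
      refine prE_congr μ fun ω => ⟨fun hω => ⟨hω.2, hω.1.1, hω.1.2.2⟩,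
        fun hω => ⟨⟨hω.2.1, by rw [hω.1, hω.2.1]; exact hbc, hω.2.2⟩, hω.1⟩⟩
    · rw [if_neg hbc,
        prE_congr μ (F := fun _ => False) fun ω =>
          ⟨fun hω => hbc (by rw [← hω.2, ← hω.1.1]; exact hω.1.2.1), False.elim⟩,
        prE_false]
  rw [hpart, Finset.sum_mul, Finset.mul_sum]
  refine Finset.sum_congr rfl fun b _ => ?_
  by_cases hbc : h b c = s
  · rw [if_pos hbc, if_pos hbc, pairfact μ Q X₁ X₂ X₃ hindep b c q]
    ring
  · rw [if_neg hbc, if_neg hbc]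
    simp

lemma c4fact (hindep : CondIndepFun3 μ X₁ X₂ X₃ Q) (s : 𝒮) (q : 𝒬) :
    prE μ (fun ω => h (X₂ ω) (X₃ ω) = s ∧ Q ω = q) * prX μ Q q =
      ∑ c, prE μ (fun ω => X₃ ω = c ∧ Q ω = q) *
        ∑ b, (if h b c = s then prE μ (fun ω => X₂ ω = b ∧ Q ω = q) else 0) := by
  have hpart : prE μ (fun ω => h (X₂ ω) (X₃ ω) = s ∧ Q ω = q) =
      ∑ c, prE μ (fun ω => X₃ ω = c ∧ h (X₂ ω) (X₃ ω) = s ∧ Q ω = q) := by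
    rw [prE_partition μ X₃ (fun ω => h (X₂ ω) (X₃ ω) = s ∧ Q ω = q)]
    exact Finset.sum_congr rfl fun c _ => prE_congr μ fun ω => by tauto
  rw [hpart, Finset.sum_mul]
  exact Finset.sum_congr rfl fun c _ => c3fact μ Q X₁ X₂ X₃ h hindep c s q

lemma c2fact (hindep : CondIndepFun3 μ X₁ X₂ X₃ Q) (a : 𝒜) (s : 𝒮) (q : 𝒬) :
    prE μ (fun ω => X₁ ω = a ∧ h (X₂ ω) (X₃ ω) = s ∧ Q ω = q) * prX μ Q q * prX μ Q q =
      prE μ (fun ω => X₁ ω = a ∧ Q ω = q) *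
        ∑ c, prE μ (fun ω => X₃ ω = c ∧ Q ω = q) *
          ∑ b, (if h b c = s then prE μ (fun ω => X₂ ω = b ∧ Q ω = q) else 0) := by
  have hpart : prE μ (fun ω => X₁ ω = a ∧ h (X₂ ω) (X₃ ω) = s ∧ Q ω = q) =
      ∑ c, prE μ (fun ω => X₁ ω = a ∧ X₃ ω = c ∧ h (X₂ ω) (X₃ ω) = s ∧ Q ω = q) := by
    rw [prE_partition μ X₃ (fun ω => X₁ ω = a ∧ h (X₂ ω) (X₃ ω) = s ∧ Q ω = q)]
    exact Finset.sum_congr rfl fun c _ => prE_congr μ fun ω => by tauto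
  rw [hpart, Finset.sum_mul, Finset.sum_mul, Finset.mul_sum]
  refine Finset.sum_congr rfl fun c _ => ?_
  rw [c1fact μ Q X₁ X₂ X₃ h hindep a c s q]
  ring

lemma condIndep_given_SQ (hindep : CondIndepFun3 μ X₁ X₂ X₃ Q)
    (a : 𝒜) (c : 𝒞) (sq : 𝒮 × 𝒬) :
    prE μ (fun ω => X₁ ω = a ∧ X₃ ω = c ∧ (h (X₂ ω) (X₃ ω), Q ω) = sq) *
        prX μ (fun ω => (h (X₂ ω) (X₃ ω), Q ω)) sq =
      prE μ (fun ω => X₁ ω = a ∧ (h (X₂ ω) (X₃ ω), Q ω) = sq) *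
        prE μ (fun ω => X₃ ω = c ∧ (h (X₂ ω) (X₃ ω), Q ω) = sq) := by
  obtain ⟨s, q⟩ := sq
  have r1 : prE μ (fun ω => X₁ ω = a ∧ X₃ ω = c ∧ (h (X₂ ω) (X₃ ω), Q ω) = (s, q)) =
      prE μ (fun ω => X₁ ω = a ∧ X₃ ω = c ∧ h (X₂ ω) (X₃ ω) = s ∧ Q ω = q) :=
    prE_congr μ fun ω => by simp [Prod.ext_iff]
  have r2 : prX μ (fun ω => (h (X₂ ω) (X₃ ω), Q ω)) (s, q) =
      prE μ (fun ω => h (X₂ ω) (X₃ ω) = s ∧ Q ω = q) :=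
    prE_congr μ fun ω => by simp [Prod.ext_iff]
  have r3 : prE μ (fun ω => X₁ ω = a ∧ (h (X₂ ω) (X₃ ω), Q ω) = (s, q)) =
      prE μ (fun ω => X₁ ω = a ∧ h (X₂ ω) (X₃ ω) = s ∧ Q ω = q) :=
    prE_congr μ fun ω => by simp [Prod.ext_iff]
  have r4 : prE μ (fun ω => X₃ ω = c ∧ (h (X₂ ω) (X₃ ω), Q ω) = (s, q)) =
      prE μ (fun ω => X₃ ω = c ∧ h (X₂ ω) (X₃ ω) = s ∧ Q ω = q) :=
    prE_congr μ fun ω => by simp [Prod.ext_iff]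
  rw [r1, r2, r3, r4]
  by_cases hq : prX μ Q q = 0
  · rw [prE_eq_zero_of_imp μ Q (fun ω hω => hω.2.2.2) hq,
      prE_eq_zero_of_imp μ Q (fun ω (hω : X₁ ω = a ∧ h (X₂ ω) (X₃ ω) = s ∧ Q ω = q) =>
        hω.2.2) hq, zero_mul, zero_mul]
  · have hq3 : prX μ Q q * prX μ Q q * prX μ Q q ≠ 0 := by
      exact mul_ne_zero (mul_ne_zero hq hq) hq
    refine mul_right_cancel₀ hq3 ?_
    calc prE μ (fun ω => X₁ ω = a ∧ X₃ ω = c ∧ h (X₂ ω) (X₃ ω) = s ∧ Q ω = q) *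
          prE μ (fun ω => h (X₂ ω) (X₃ ω) = s ∧ Q ω = q) *
          (prX μ Q q * prX μ Q q * prX μ Q q)
        = (prE μ (fun ω => X₁ ω = a ∧ X₃ ω = c ∧ h (X₂ ω) (X₃ ω) = s ∧ Q ω = q) *
            prX μ Q q * prX μ Q q) *
          (prE μ (fun ω => h (X₂ ω) (X₃ ω) = s ∧ Q ω = q) * prX μ Q q) := by ring
      _ = (prE μ (fun ω => X₁ ω = a ∧ Q ω = q) * prE μ (fun ω => X₃ ω = c ∧ Q ω = q) *
            ∑ b, (if h b c = s then prE μ (fun ω => X₂ ω = b ∧ Q ω = q) else 0)) *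
          ∑ c', prE μ (fun ω => X₃ ω = c' ∧ Q ω = q) *
            ∑ b, (if h b c' = s then prE μ (fun ω => X₂ ω = b ∧ Q ω = q) else 0) := by
          rw [c1fact μ Q X₁ X₂ X₃ h hindep a c s q, c4fact μ Q X₁ X₂ X₃ h hindep s q]
      _ = (prE μ (fun ω => X₁ ω = a ∧ Q ω = q) *
            ∑ c', prE μ (fun ω => X₃ ω = c' ∧ Q ω = q) *
              ∑ b, (if h b c' = s then prE μ (fun ω => X₂ ω = b ∧ Q ω = q) else 0)) *
          (prE μ (fun ω => X₃ ω = c ∧ Q ω = q) *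
            ∑ b, (if h b c = s then prE μ (fun ω => X₂ ω = b ∧ Q ω = q) else 0)) := by ring
      _ = (prE μ (fun ω => X₁ ω = a ∧ h (X₂ ω) (X₃ ω) = s ∧ Q ω = q) * prX μ Q q * prX μ Q q) *
          (prE μ (fun ω => X₃ ω = c ∧ h (X₂ ω) (X₃ ω) = s ∧ Q ω = q) * prX μ Q q) := by
          rw [c2fact μ Q X₁ X₂ X₃ h hindep a s q, c3fact μ Q X₁ X₂ X₃ h hindep c s q]
      _ = prE μ (fun ω => X₁ ω = a ∧ h (X₂ ω) (X₃ ω) = s ∧ Q ω = q) *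
          prE μ (fun ω => X₃ ω = c ∧ h (X₂ ω) (X₃ ω) = s ∧ Q ω = q) *
          (prX μ Q q * prX μ Q q * prX μ Q q) := by ring

end Prob

/-- `H(Y₁|X₃₁,Q) − H(X₂₁|Q) ≥ H(Y₁|Q) − H(S₁|Q)`. -/
theorem second_term_ge_last
    {Ω 𝒬 𝒜 ℬ 𝒞 𝒮 𝒴 : Type} [Fintype 𝒬] [Nonempty 𝒬] [Fintype 𝒜] [Nonempty 𝒜]
    [Fintype ℬ] [Nonempty ℬ] [Fintype 𝒞] [Nonempty 𝒞] [Fintype 𝒮] [Nonempty 𝒮]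
    [Fintype 𝒴] [Nonempty 𝒴]
    (μ : FinPMF Ω) (Q : Ω → 𝒬) (X₁₁ : Ω → 𝒜) (X₂₁ : Ω → ℬ) (X₃₁ : Ω → 𝒞)
    (h : ℬ → 𝒞 → 𝒮) (f : 𝒜 → 𝒮 → 𝒴)
    (hindep : CondIndepFun3 μ X₁₁ X₂₁ X₃₁ Q)
    (hh : OneToOne h) (hf : OneToOne f) :
    condH μ (fun ω => f (X₁₁ ω) (h (X₂₁ ω) (X₃₁ ω))) (fun ω => (X₃₁ ω, Q ω)) - condH μ X₂₁ Q ≥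
      condH μ (fun ω => f (X₁₁ ω) (h (X₂₁ ω) (X₃₁ ω))) Q - condH μ (fun ω => h (X₂₁ ω) (X₃₁ ω)) Q := by
  have hFnn : entH μ (fun ω => (X₃₁ ω, f (X₁₁ ω) (h (X₂₁ ω) (X₃₁ ω)), Q ω)) +
      entH μ (fun ω => (h (X₂₁ ω) (X₃₁ ω), f (X₁₁ ω) (h (X₂₁ ω) (X₃₁ ω)), Q ω)) ≥
      entH μ (fun ω => (X₃₁ ω, h (X₂₁ ω) (X₃₁ ω), f (X₁₁ ω) (h (X₂₁ ω) (X₃₁ ω)), Q ω)) +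
      entH μ (fun ω => (f (X₁₁ ω) (h (X₂₁ ω) (X₃₁ ω)), Q ω)) :=
    entH_submod μ X₃₁ (fun ω => h (X₂₁ ω) (X₃₁ ω))
      (fun ω => (f (X₁₁ ω) (h (X₂₁ ω) (X₃₁ ω)), Q ω))
  have hPa : entH μ (fun ω => (X₃₁ ω, f (X₁₁ ω) (h (X₂₁ ω) (X₃₁ ω)), Q ω)) =
      entH μ (fun ω => (f (X₁₁ ω) (h (X₂₁ ω) (X₃₁ ω)), X₃₁ ω, Q ω)) :=
    entH_comp_inj μ (fun p : 𝒴 × 𝒞 × 𝒬 => (p.2.1, p.1, p.2.2))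
      (by rintro ⟨y, c, q⟩ ⟨y', c', q'⟩ hp; simp [Prod.ext_iff] at hp ⊢; tauto)
      (fun ω => (f (X₁₁ ω) (h (X₂₁ ω) (X₃₁ ω)), X₃₁ ω, Q ω))
  have hPc : entH μ (fun ω => (h (X₂₁ ω) (X₃₁ ω), f (X₁₁ ω) (h (X₂₁ ω) (X₃₁ ω)), Q ω)) =
      entH μ (fun ω => (X₁₁ ω, h (X₂₁ ω) (X₃₁ ω), Q ω)) :=
    entH_comp_inj μ (fun p : 𝒜 × 𝒮 × 𝒬 => (p.2.1, f p.1 p.2.1, p.2.2))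
      (by
        rintro ⟨a, s, q⟩ ⟨a', s', q'⟩ hp
        simp only [Prod.ext_iff] at hp ⊢
        obtain ⟨hs, hfe, hq⟩ := hp
        subst hs
        exact ⟨hf.1 s hfe, rfl, hq⟩)
      (fun ω => (X₁₁ ω, h (X₂₁ ω) (X₃₁ ω), Q ω))
  have hPb : entH μ (fun ω => (X₃₁ ω, h (X₂₁ ω) (X₃₁ ω), f (X₁₁ ω) (h (X₂₁ ω) (X₃₁ ω)), Q ω)) =
      entH μ (fun ω => (X₁₁ ω, X₃₁ ω, h (X₂₁ ω) (X₃₁ ω), Q ω)) :=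
    entH_comp_inj μ (fun p : 𝒜 × 𝒞 × 𝒮 × 𝒬 => (p.2.1, p.2.2.1, f p.1 p.2.2.1, p.2.2.2))
      (by
        rintro ⟨a, c, s, q⟩ ⟨a', c', s', q'⟩ hp
        simp only [Prod.ext_iff] at hp ⊢
        obtain ⟨hc, hs, hfe, hq⟩ := hp
        subst hs
        exact ⟨hf.1 s hfe, hc, rfl, hq⟩)
      (fun ω => (X₁₁ ω, X₃₁ ω, h (X₂₁ ω) (X₃₁ ω), Q ω))
  have hFci : entH μ (fun ω => (X₁₁ ω, X₃₁ ω, h (X₂₁ ω) (X₃₁ ω), Q ω)) +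
      entH μ (fun ω => (h (X₂₁ ω) (X₃₁ ω), Q ω)) =
      entH μ (fun ω => (X₁₁ ω, h (X₂₁ ω) (X₃₁ ω), Q ω)) +
      entH μ (fun ω => (X₃₁ ω, h (X₂₁ ω) (X₃₁ ω), Q ω)) :=
    entH_condIndep μ X₁₁ X₃₁ (fun ω => (h (X₂₁ ω) (X₃₁ ω), Q ω))
      (condIndep_given_SQ μ Q X₁₁ X₂₁ X₃₁ h hindep)
  have hPswap : entH μ (fun ω => (X₃₁ ω, h (X₂₁ ω) (X₃₁ ω), Q ω)) =
      entH μ (fun ω => (h (X₂₁ ω) (X₃₁ ω), X₃₁ ω, Q ω)) :=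
    entH_comp_inj μ (fun p : 𝒮 × 𝒞 × 𝒬 => (p.2.1, p.1, p.2.2))
      (by rintro ⟨s, c, q⟩ ⟨s', c', q'⟩ hp; simp [Prod.ext_iff] at hp ⊢; tauto)
      (fun ω => (h (X₂₁ ω) (X₃₁ ω), X₃₁ ω, Q ω))
  have hFB : entH μ (fun ω => (h (X₂₁ ω) (X₃₁ ω), X₃₁ ω, Q ω)) =
      entH μ (fun ω => (X₂₁ ω, X₃₁ ω, Q ω)) :=
    entH_comp_inj μ (fun p : ℬ × 𝒞 × 𝒬 => (h p.1 p.2.1, p.2.1, p.2.2))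
      (by
        rintro ⟨b, c, q⟩ ⟨b', c', q'⟩ hp
        simp only [Prod.ext_iff] at hp ⊢
        obtain ⟨hhe, hc, hq⟩ := hp
        subst hc
        exact ⟨hh.1 c hhe, rfl, hq⟩)
      (fun ω => (X₂₁ ω, X₃₁ ω, Q ω))
  have hF1 : entH μ (fun ω => (X₂₁ ω, X₃₁ ω, Q ω)) + entH μ Q =
      entH μ (fun ω => (X₂₁ ω, Q ω)) + entH μ (fun ω => (X₃₁ ω, Q ω)) :=
    entH_condIndep μ X₂₁ X₃₁ Q (pairfact μ Q X₁₁ X₂₁ X₃₁ hindep)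
  simp only [condH]
  linarith [hFnn, hPa, hPc, hPb, hFci, hPswap, hFB, hF1]
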